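/- For all real numbers S, I, C with 1 ≤ C ≤ I, I ≤ S, and C·(I+1) ≤ S: log₂(1 + S/I + I) + log₂(2I) + log₂(2 + S/I) − log₂(1 + S/(2I)) − log₂(S + I² + I) ≤ 2. -/

import Mathlib

theorem stmt_11 (S I C : ℝ) (hC : 1 ≤ C) (hCI : C ≤ I) (hIS : I ≤ S)
    (hCS : C * (I + 1) ≤ S) :
    Real.logb 2 (1 + S / I + I) + Real.logb 2 (2 * I) + Real.logb 2 (2 + S / I)
      - Real.logb 2 (1 + S / (2 * I)) - Real.logb 2 (S + I ^ 2 + I) ≤ 2 := by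
  have hI : (0:ℝ) < I := lt_of_lt_of_le one_pos (hC.trans hCI)
  have hS : (0:ℝ) < S := lt_of_lt_of_le hI hIS
  have hF : (0:ℝ) < S + I ^ 2 + I := by positivity
  have hE : (0:ℝ) < 1 + S / (2 * I) := by positivity
  have hA : 1 + S / I + I = (S + I ^ 2 + I) / I := by field_simp; ring
  have hD : 2 + S / I = 2 * (1 + S / (2 * I)) := by field_simp
  rw [hA, hD, Real.logb_div hF.ne' hI.ne', Real.logb_mul two_ne_zero hI.ne',
    Real.logb_mul two_ne_zero hE.ne', Real.logb_self_eq_one one_lt_two]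
  ring_nf
  norm_num
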